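/- Let P : ℂ² → ℂ be a polynomial function of z₁, zₙ, z̄₁, z̄ₙ (i.e., a finite ℂ-linear combination of monomials z₁ᵃ zₙᵇ z̄₁ᶜ z̄ₙᵈ) such that P(μ z₁ + c zₙ, μ zₙ) = P(z₁, zₙ) for all (z₁, zₙ) ∈ ℂ² and all μ, c ∈ ℂ with |μ| = 1 and Re(c μ̄) = 0. Then there exists a function q : ℝ × ℝ → ℂ such that P(z₁, zₙ) = q(Re(z₁ z̄ₙ), |zₙ|²) for all (z₁, zₙ) ∈ ℂ². (In the paper, this describes the invariants of the subgroup I of S consisting of matrices with |μ| = 1, x = 0, A = E_{n−2}.) -/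

import Mathlib

/-- Any polynomial in z₁, zₙ, z̄₁, z̄ₙ invariant under the transformations
(z₁, zₙ) ↦ (μz₁ + czₙ, μzₙ), |μ| = 1, Re(cμ̄) = 0 (the group I of the paper)
is a function of Re(z₁z̄ₙ) and |zₙ|². -/
theorem stmt16 (s : Finset (ℕ × ℕ × ℕ × ℕ)) (C : ℕ × ℕ × ℕ × ℕ → ℂ)
    (P : ℂ → ℂ → ℂ)
    (hP : ∀ z1 zn : ℂ, P z1 zn =
      ∑ k ∈ s, C k * z1 ^ k.1 * zn ^ k.2.1 *
        ((starRingEnd ℂ) z1) ^ k.2.2.1 * ((starRingEnd ℂ) zn) ^ k.2.2.2)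
    (hinv : ∀ μ c : ℂ, ‖μ‖ = 1 → (c * (starRingEnd ℂ) μ).re = 0 →
      ∀ z1 zn : ℂ, P (μ * z1 + c * zn) (μ * zn) = P z1 zn) :
    ∃ q : ℝ × ℝ → ℂ, ∀ z1 zn : ℂ,
      P z1 zn = q ((z1 * (starRingEnd ℂ) zn).re, ‖zn‖ ^ 2) := by
  -- Key lemma: points with equal invariants and nonzero zn have equal P-values
  have key : ∀ z1 zn w1 wn : ℂ, zn ≠ 0 → wn ≠ 0 →
      (z1 * (starRingEnd ℂ) zn).re = (w1 * (starRingEnd ℂ) wn).re →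
      ‖zn‖ = ‖wn‖ → P z1 zn = P w1 wn := by
    intro z1 zn w1 wn hzn hwn hre habs
    set μ : ℂ := wn / zn with hμdef
    have hμ : ‖μ‖ = 1 := by
      rw [hμdef, norm_div, ← habs, div_self]
      simpa using hzn
    have hμzn : μ * zn = wn := div_mul_cancel₀ _ hzn
    have h1 : P z1 zn = P (μ * z1) wn := by
      have := hinv μ 0 hμ (by simp) z1 zn
      rw [hμzn] at this
      simpa using this.symm
    have hμconj : μ * (starRingEnd ℂ) wn = (starRingEnd ℂ) zn := by
      have : μ * (starRingEnd ℂ) (μ * zn) = (μ * (starRingEnd ℂ) μ) * (starRingEnd ℂ) zn := by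
        rw [map_mul]; ring
      rw [hμzn] at this
      rw [this, Complex.mul_conj, ← Complex.sq_norm, hμ, one_pow, Complex.ofReal_one, one_mul]
    set c : ℂ := (μ * z1 - w1) / wn with hcdef
    have hcre : ((μ * z1 - w1) * (starRingEnd ℂ) wn).re = 0 := by
      have : (μ * z1 - w1) * (starRingEnd ℂ) wn
          = z1 * (starRingEnd ℂ) zn - w1 * (starRingEnd ℂ) wn := by
        rw [sub_mul]
        congr 1
        rw [mul_comm μ z1, mul_assoc, hμconj]
      rw [this, Complex.sub_re, hre, sub_self]
    have hc : (c * (starRingEnd ℂ) 1).re = 0 := by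
      have h0 : (μ * z1 - w1).re * wn.re + (μ * z1 - w1).im * wn.im = 0 := by
        have h := hcre
        rw [Complex.mul_re, Complex.conj_re, Complex.conj_im] at h
        linarith
      rw [map_one, mul_one, hcdef, Complex.div_re, ← add_div, h0, zero_div]
    have h2 : P (μ * z1) wn = P w1 wn := by
      have := hinv 1 c (by simp) hc w1 wn
      rw [one_mul, one_mul] at this
      rw [← this]
      congr 1
      rw [hcdef, div_mul_cancel₀ _ hwn]
      ring
    rw [h1, h2]
  -- P is continuous
  have hcont : Continuous (fun p : ℂ × ℂ => P p.1 p.2) := by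
    have : (fun p : ℂ × ℂ => P p.1 p.2) = fun p : ℂ × ℂ =>
        ∑ k ∈ s, C k * p.1 ^ k.1 * p.2 ^ k.2.1 *
          ((starRingEnd ℂ) p.1) ^ k.2.2.1 * ((starRingEnd ℂ) p.2) ^ k.2.2.2 := by
      funext p; exact hP p.1 p.2
    rw [this]
    apply continuous_finset_sum
    intro k _
    exact ((((continuous_const.mul (continuous_fst.pow _)).mul (continuous_snd.pow _)).mul
      ((Complex.continuous_conj.comp continuous_fst).pow _)).mul
      ((Complex.continuous_conj.comp continuous_snd).pow _))
  -- P on zn = 0 is constant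
  have hB : ∀ z1 : ℂ, P z1 0 = P 0 0 := by
    have hBy : ∀ y : ℝ, P ((y : ℂ) * Complex.I) 0 = P 0 0 := by
      intro y
      have heq : (fun ε : ℝ => P ((y : ℂ) * Complex.I) (ε : ℂ))
          = fun ε : ℝ => P 0 (ε : ℂ) := by
        apply Continuous.ext_on (dense_compl_singleton (0 : ℝ))
        · exact hcont.comp (continuous_const.prodMk Complex.continuous_ofReal)
        · exact hcont.comp (continuous_const.prodMk Complex.continuous_ofReal)
        · intro ε hε
          have hε' : (ε : ℂ) ≠ 0 := by
            simpa using (Set.mem_compl_singleton_iff.mp hε)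
          apply key _ _ _ _ hε' hε' _ rfl
          simp [Complex.conj_ofReal]
      have := congrFun heq 0
      simpa using this
    intro z1
    rcases eq_or_ne z1 0 with rfl | hz1
    · rfl
    · have habs : (0:ℝ) < ‖z1‖ := by
        simpa using norm_pos_iff.mpr hz1
      set μ : ℂ := z1 / ((‖z1‖ : ℂ) * Complex.I) with hμdef
      have hd : ((‖z1‖ : ℂ) * Complex.I) ≠ 0 :=
        mul_ne_zero (by exact_mod_cast ne_of_gt habs) Complex.I_ne_zero
      have hμ : ‖μ‖ = 1 := by
        rw [hμdef, norm_div, norm_mul, Complex.norm_real, Complex.norm_I,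
          norm_norm, mul_one, div_self (ne_of_gt habs)]
      have := hinv μ 0 hμ (by simp) ((‖z1‖ : ℂ) * Complex.I) 0
      simp only [mul_zero, add_zero] at this
      rw [hμdef, div_mul_cancel₀ _ hd] at this
      rw [this]
      exact hBy (‖z1‖)
  -- define q
  refine ⟨fun p => if p.2 ≤ 0 then P 0 0 else
    P ((p.1 / Real.sqrt p.2 : ℝ) : ℂ) ((Real.sqrt p.2 : ℝ) : ℂ), ?_⟩
  intro z1 zn
  rcases eq_or_ne zn 0 with rfl | hzn
  · simp [hB z1]
  · have habs : (0:ℝ) < ‖zn‖ := norm_pos_iff.mpr hzn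
    have hr : ¬ (‖zn‖ ^ 2 ≤ 0) := by rw [not_le]; positivity
    simp only [hr, if_false]
    have hsq : Real.sqrt (‖zn‖ ^ 2) = ‖zn‖ :=
      Real.sqrt_sq habs.le
    rw [hsq]
    apply key
    · exact hzn
    · simpa using ne_of_gt habs
    · rw [Complex.conj_ofReal, ← Complex.ofReal_mul, Complex.ofReal_re,
        div_mul_cancel₀ _ (ne_of_gt habs)]
    · rw [Complex.norm_real, norm_norm]
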